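/- Every palindromic prefix of ψ(v) equals ψ(u) for some prefix u of v. -/
import Mathlib


def palClosure (w : List Bool) : List Bool :=
  let k := Nat.find (p := fun k => (w.drop k).reverse = w.drop k)
    ⟨w.length, by simp⟩
  w.take k ++ w.drop k ++ (w.take k).reverse

def psi (v : List Bool) : List Bool := v.foldl (fun w x => palClosure (w ++ [x])) []

def E (v : List Bool) : List Bool := v.map (!·)

def mu (x : Bool) (w : List Bool) : List Bool := w.flatMap (fun y => if y = x then [x] else [x, y])

def muW : List Bool → List Bool → List Bool
  | [], w => w
  | x :: v, w => mu x (muW v w)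

def vN (n : ℕ) : List Bool := (List.range n).map (fun i => decide (i % 2 = 1))

def fibF : ℕ → ℕ
  | 0 => 1
  | 1 => 1
  | n + 2 => fibF (n + 1) + fibF n

def HasPeriod (w : List Bool) (p : ℕ) : Prop :=
  0 < p ∧ ∀ i j (hi : i < w.length) (hj : j < w.length),
    i % p = j % p → w.get ⟨i, hi⟩ = w.get ⟨j, hj⟩

noncomputable def minPeriod (w : List Bool) : ℕ := sInf {p | HasPeriod w p}

def dOp : List Bool → List Bool
  | x :: y :: u => y :: x :: u
  | w => w

def cOp (v : List Bool) : List Bool := (dOp v.reverse).reverse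

def contAux : List ℕ → ℕ
  | [] => 1
  | [a] => a
  | a :: b :: t => a * contAux (b :: t) + contAux t

def kOf (w : List Bool) : ℕ :=
  Nat.find (p := fun k => (w.drop k).reverse = w.drop k) ⟨w.length, by simp⟩

lemma kOf_le (w : List Bool) : kOf w ≤ w.length :=
  Nat.find_le (by simp)

lemma kOf_pal (w : List Bool) : (w.drop (kOf w)).reverse = w.drop (kOf w) :=
  Nat.find_spec (⟨w.length, by simp⟩ : ∃ k, (w.drop k).reverse = w.drop k)

lemma palClosure_eq (w : List Bool) :
    palClosure w = w ++ (w.take (kOf w)).reverse := by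
  show w.take (kOf w) ++ w.drop (kOf w) ++ (w.take (kOf w)).reverse = _
  rw [List.take_append_drop]

lemma palClosure_prefix (w : List Bool) : w <+: palClosure w := by
  rw [palClosure_eq]; exact List.prefix_append _ _

lemma palClosure_length (w : List Bool) :
    (palClosure w).length = w.length + kOf w := by
  rw [palClosure_eq]; simp [Nat.min_eq_left (kOf_le w)]

lemma palClosure_palindrome (w : List Bool) :
    (palClosure w).reverse = palClosure w := by
  have hb := kOf_pal w
  have hrev : w.reverse = w.drop (kOf w) ++ (w.take (kOf w)).reverse := by
    conv_lhs => rw [← List.take_append_drop (kOf w) w]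
    rw [List.reverse_append, hb]
  rw [palClosure_eq, List.reverse_append, List.reverse_reverse, hrev,
    ← List.append_assoc, List.take_append_drop]

lemma drop_pal_of_palindrome {w q : List Bool} (hpre : w <+: q) (hq : q.reverse = q)
    (hle : q.length ≤ 2 * w.length) :
    (w.drop (q.length - w.length)).reverse = w.drop (q.length - w.length) := by
  obtain ⟨t, rfl⟩ := hpre
  have hjt : (w ++ t).length - w.length = t.length := by simp
  rw [hjt]
  have hlt : t.length ≤ w.length := by simp at hle; omega
  have h1 : t.reverse ++ w.reverse = w ++ t := by simpa [List.reverse_append] using hq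
  have h2 : w.reverse = w.drop t.length ++ t := by
    have := congrArg (List.drop t.length) h1
    simpa [List.drop_append_of_le_length hlt] using this
  have h3 : w = t.reverse ++ (w.drop t.length).reverse := by
    simpa [List.reverse_append] using congrArg List.reverse h2
  have h4 := congrArg (List.drop t.length) h3
  simp at h4
  rw [← h4]

lemma palClosure_min {w q : List Bool} (hpre : w <+: q) (hq : q.reverse = q) :
    (palClosure w).length ≤ q.length := by
  by_contra h
  push_neg at h
  rw [palClosure_length] at h
  have hwq : w.length ≤ q.length := hpre.length_le
  have hj : q.length - w.length < kOf w := by omega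
  have hle : q.length ≤ 2 * w.length := by have := kOf_le w; omega
  exact Nat.find_min _ hj (drop_pal_of_palindrome hpre hq hle)

lemma psi_append (v : List Bool) (x : Bool) :
    psi (v ++ [x]) = palClosure (psi v ++ [x]) := by
  simp [psi, List.foldl_append]

theorem stmt3 (v p : List Bool) (hp : p <+: psi v) (hpal : p.reverse = p) :
    ∃ u : List Bool, u <+: v ∧ psi u = p := by
  revert hp hpal
  induction v using List.reverseRecOn generalizing p with
  | nil =>
    intro hp _
    refine ⟨[], List.prefix_refl _, ?_⟩
    have : p = [] := List.prefix_nil.mp (by simpa [psi] using hp)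
    simp [psi, this]
  | append_singleton v x ih =>
    intro hp hpal
    rw [psi_append] at hp
    by_cases h : p.length ≤ (psi v).length
    · have h1 : psi v <+: palClosure (psi v ++ [x]) :=
        (List.prefix_append _ _).trans (palClosure_prefix _)
      have h2 : p <+: psi v := List.prefix_of_prefix_length_le hp h1 h
      obtain ⟨u, hu, hu2⟩ := ih p h2 hpal
      exact ⟨u, hu.trans (List.prefix_append _ _), hu2⟩
    · push_neg at h
      have hx : psi v ++ [x] <+: p :=
        List.prefix_of_prefix_length_le (palClosure_prefix _) hp (by simp; omega)
      have hmin := palClosure_min hx hpal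
      have heq : p = palClosure (psi v ++ [x]) :=
        hp.eq_of_length (le_antisymm hp.length_le hmin)
      exact ⟨v ++ [x], List.prefix_refl _, by rw [psi_append, heq]⟩
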